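/- Let A be a discrete almost periodic set in ℝ^p. Then the number of elements of A contained in any ball of radius 1 is uniformly bounded: there exists N ∈ ℕ such that for every x ∈ ℝ^p the set A ∩ B(x, 1) has at most N elements. -/

import Mathlib

open Pointwise

noncomputable section

/-- A set `S ⊆ ℝ^p` is relatively dense if there is `R` such that every ball of
radius `R` contains a point of `S`. -/
def RelativelyDense {p : ℕ} (S : Set (EuclideanSpace ℝ (Fin p))) : Prop :=
  ∃ R : ℝ, ∀ x : EuclideanSpace ℝ (Fin p), ∃ s ∈ S, dist x s ≤ R

/-- A set `A ⊆ ℝ^p` is discrete: closed with finite intersection with every compact set. -/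
def DiscreteSet {p : ℕ} (A : Set (EuclideanSpace ℝ (Fin p))) : Prop :=
  IsClosed A ∧ ∀ K : Set (EuclideanSpace ℝ (Fin p)), IsCompact K → (A ∩ K).Finite

/-- `τ` is an `ε`-almost period of `A`: there is a bijection `σ : A → A` with
`|a + τ - σ a| < ε` for all `a ∈ A`. -/
def IsAlmostPeriodOf {p : ℕ} (A : Set (EuclideanSpace ℝ (Fin p))) (ε : ℝ)
    (τ : EuclideanSpace ℝ (Fin p)) : Prop :=
  ∃ σ : A ≃ A, ∀ a : A,
    ‖(a : EuclideanSpace ℝ (Fin p)) + τ - (σ a : EuclideanSpace ℝ (Fin p))‖ < ε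

/-- `A` is an almost periodic set: for every `ε > 0` its set of `ε`-almost periods is
relatively dense. -/
def AlmostPeriodicSet {p : ℕ} (A : Set (EuclideanSpace ℝ (Fin p))) : Prop :=
  ∀ ε : ℝ, 0 < ε → RelativelyDense {τ | IsAlmostPeriodOf A ε τ}

/-- `L` is a full rank lattice: the set of integer linear combinations of `p` linearly
independent vectors of `ℝ^p`. -/
def IsFullRankLattice {p : ℕ} (L : Set (EuclideanSpace ℝ (Fin p))) : Prop :=
  ∃ T : Fin p → EuclideanSpace ℝ (Fin p), LinearIndependent ℝ T ∧
    L = {x | ∃ n : Fin p → ℤ, x = ∑ i, (n i : ℝ) • T i}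

/-- For a discrete almost periodic set, the number of its points in any ball of
radius `1` is uniformly bounded. -/
theorem discrete_almostPeriodic_uniformly_bounded_in_unit_balls {p : ℕ}
    (A : Set (EuclideanSpace ℝ (Fin p)))
    (hdisc : DiscreteSet A) (hap : AlmostPeriodicSet A) :
    ∃ N : ℕ, ∀ x : EuclideanSpace ℝ (Fin p),
      (A ∩ Metric.ball x 1).encard ≤ N := by
  obtain ⟨R, hR⟩ := hap 1 one_pos
  have hfin := hdisc.2 _ (isCompact_closedBall (0 : EuclideanSpace ℝ (Fin p)) (R + 2))
  refine ⟨hfin.toFinset.card, fun x => ?_⟩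
  obtain ⟨τ, ⟨σ, hσ⟩, hτ⟩ := hR (-x)
  have hxτ : ‖x + τ‖ ≤ R := by
    have : dist (-x) τ = ‖x + τ‖ := by
      rw [dist_eq_norm, ← norm_neg]; congr 1; abel
    linarith [this ▸ hτ]
  classical
  set f : EuclideanSpace ℝ (Fin p) → EuclideanSpace ℝ (Fin p) :=
    fun a => if h : a ∈ A then (σ ⟨a, h⟩ : EuclideanSpace ℝ (Fin p)) else a with hf
  have hmap : Set.MapsTo f (A ∩ Metric.ball x 1) (A ∩ Metric.closedBall 0 (R + 2)) := by
    rintro a ⟨haA, hab⟩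
    simp only [hf, dif_pos haA]
    refine ⟨(σ ⟨a, haA⟩).2, ?_⟩
    rw [Metric.mem_closedBall, dist_zero_right]
    have h1 := hσ ⟨a, haA⟩
    have h2 : ‖a - x‖ < 1 := by
      rw [Metric.mem_ball, dist_eq_norm] at hab; exact hab
    have : ((σ ⟨a, haA⟩ : A) : EuclideanSpace ℝ (Fin p)) =
        -(a + τ - (σ ⟨a, haA⟩ : A)) + (a - x) + (x + τ) := by abel
    rw [this]
    calc ‖-(a + τ - ((σ ⟨a, haA⟩ : A) : EuclideanSpace ℝ (Fin p))) + (a - x) + (x + τ)‖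
        ≤ ‖-(a + τ - ((σ ⟨a, haA⟩ : A) : EuclideanSpace ℝ (Fin p))) + (a - x)‖ + ‖x + τ‖ :=
          norm_add_le _ _
      _ ≤ ‖-(a + τ - ((σ ⟨a, haA⟩ : A) : EuclideanSpace ℝ (Fin p)))‖ + ‖a - x‖ + ‖x + τ‖ := by
          gcongr; exact norm_add_le _ _
      _ ≤ R + 2 := by rw [norm_neg]; linarith
  have hinj : Set.InjOn f (A ∩ Metric.ball x 1) := by
    rintro a ⟨haA, -⟩ b ⟨hbA, -⟩ hab
    simp only [hf, dif_pos haA, dif_pos hbA] at hab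
    have := σ.injective (Subtype.ext hab)
    exact congrArg Subtype.val this
  calc (A ∩ Metric.ball x 1).encard
      ≤ (A ∩ Metric.closedBall 0 (R + 2)).encard :=
        Set.encard_le_encard_of_injOn hmap hinj
    _ = hfin.toFinset.card := by
        rw [Set.Finite.encard_eq_coe_toFinset_card hfin]
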